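/- arXiv:2506.10492 — 2 statements merged into one kernel-verified Lean document; each statement's English description precedes it below -/
import Mathlib

section
/- Let (G,σ,w) be a signed graph on n vertices that is both positive-connected and negative-connected, with consensus index ε₀. For every 0 < ε < ε₀, the second smallest eigenvalue λ₂^(ε) of L_ε = L₊ − εL₋ satisfies λ₂^(ε) ≤ 2·d⁺_max − ε·μ₋⁰/(D·n), where D is the diameter of the underlying graph G, d⁺_max = max_{i∈V} d_i⁺, and μ₋⁰ is the minimum of the weights w_ij over edges (i,j)∈E₋. -/
open Matrix BigOperators

open scoped Classical

section Aux

lemma aux_len_mul_le_sum (b : ℝ) (t : List ℝ) (h : ∀ x ∈ t, b ≤ x) : (t.length : ℝ) * b ≤ t.sum := by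
  induction t with
  | nil => simp
  | cons a t ih =>
    simp only [List.length_cons, List.sum_cons]
    push_cast
    have := h a (by simp)
    have := ih (fun x hx => h x (by simp [hx]))
    nlinarith

lemma aux_list (l : List ℝ) (hs : l.Pairwise (· ≤ ·)) (hnn : ∀ x ∈ l, 0 ≤ x)
    (hl : 2 ≤ l.length) : ((l.length : ℝ) - 1) * l.getD 1 0 ≤ l.sum := by
  match l, hl with
  | a :: b :: t, _ =>
    simp only [List.length_cons, List.sum_cons]
    show _ * (b::t).getD 0 0 ≤ _
    have ha : 0 ≤ a := hnn a (by simp)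
    have hbt : ∀ x ∈ t, b ≤ x := by
      have := hs.tail
      intro x hx
      exact List.rel_of_pairwise_cons this hx
    have h1 : (t.length : ℝ) * b ≤ t.sum := aux_len_mul_le_sum b t hbt
    have hb : 0 ≤ b := hnn b (by simp)
    rw [List.getD_cons_zero]
    push_cast
    nlinarith

lemma aux_trace_eq_sum_eigs {n : ℕ} {A : Matrix (Fin n) (Fin n) ℝ} (hA : A.IsHermitian) :
    A.trace = ∑ i, hA.eigenvalues i := by
  conv_lhs => rw [hA.spectral_theorem]
  rw [Unitary.conjStarAlgAut_apply, Matrix.trace_mul_cycle]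
  rw [Unitary.coe_star_mul_self, one_mul, Matrix.trace_diagonal]
  simp

lemma lap_quad {n : ℕ} (f : Fin n → Fin n → ℝ) (hsym : ∀ i j, f i j = f j i)
    (hdiag : ∀ i, f i i = 0) (x : Fin n → ℝ) :
    x ⬝ᵥ (Matrix.of fun i j => if i = j then (∑ k, f i k) else -f i j) *ᵥ x
      = (∑ i, ∑ j, f i j * (x i - x j) ^ 2) / 2 := by
  have inner : ∀ i, (∑ j, (if i = j then (∑ k, f i k) else -f i j) * x j)
      = (∑ j, f i j * x i) - ∑ j, f i j * x j := by
    intro i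
    have e : ∀ j, (if i = j then (∑ k, f i k) else -f i j) * x j
        = ((if j = i then (∑ k, f i k) * x i else 0) + (if j = i then f i j * x j else 0))
          - f i j * x j := by
      intro j
      rcases eq_or_ne i j with h | h
      · subst h; simp [hdiag i]
      · simp [h, h.symm]
    rw [Finset.sum_congr rfl fun j _ => e j, Finset.sum_sub_distrib, Finset.sum_add_distrib,
      Finset.sum_ite_eq' Finset.univ i, Finset.sum_ite_eq' Finset.univ i]
    simp [hdiag i, Finset.sum_mul]
  rw [eq_div_iff (by norm_num : (2:ℝ) ≠ 0)]
  simp only [dotProduct, Matrix.mulVec, Matrix.of_apply]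
  calc (∑ i, x i * ∑ j, (fun j => (if i = j then (∑ k, f i k) else -f i j) * x j) j) * 2
      = ∑ i, ∑ j, (f i j * x i * x i - f i j * x i * x j) * 2 := by
        rw [Finset.sum_mul]
        refine Finset.sum_congr rfl fun i _ => ?_
        rw [show (∑ j, (fun j => (if i = j then (∑ k, f i k) else -f i j) * x j) j)
             = (∑ j, f i j * x i) - ∑ j, f i j * x j from inner i]
        rw [mul_sub, Finset.mul_sum, Finset.mul_sum, sub_mul, Finset.sum_mul, Finset.sum_mul,
          ← Finset.sum_sub_distrib]
        refine Finset.sum_congr rfl fun j _ => by ring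
    _ = ∑ i, ∑ j, f i j * (x i - x j) ^ 2 := by
        have swap : ∑ i, ∑ j, f i j * x j * x j = ∑ i, ∑ j, f i j * x i * x i := by
          rw [Finset.sum_comm]
          exact Finset.sum_congr rfl fun j _ => Finset.sum_congr rfl fun i _ => by rw [hsym]
        have expand : ∀ i j, f i j * (x i - x j) ^ 2
            = (f i j * x i * x i - f i j * x i * x j) * 2 + (f i j * x j * x j - f i j * x i * x i) := by
          intro i j; ring
        rw [Finset.sum_congr rfl fun i _ => Finset.sum_congr rfl fun j _ => expand i j]
        simp only [Finset.sum_add_distrib, Finset.sum_sub_distrib]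
        rw [swap]
        ring

lemma herm_gen {n : ℕ} (A : Matrix (Fin n) (Fin n) ℝ) (h : ∀ i j, A i j = A j i) :
    A.IsHermitian := by
  ext i j
  simp [Matrix.conjTranspose_apply, h i j]

end Aux

/-- Moore–Penrose pseudoinverse of a square real matrix (chosen via the
defining Penrose equations; it is unique when it exists). -/
noncomputable def pinv {n : ℕ} (A : Matrix (Fin n) (Fin n) ℝ) : Matrix (Fin n) (Fin n) ℝ :=
  if h : ∃ B : Matrix (Fin n) (Fin n) ℝ,
      A * B * A = A ∧ B * A * B = B ∧ (A * B)ᵀ = A * B ∧ (B * A)ᵀ = B * A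
  then h.choose else 0

/-- The eigenvalues of a symmetric real matrix, sorted in nondecreasing order. -/
noncomputable def sortedEigs {n : ℕ} (A : Matrix (Fin n) (Fin n) ℝ) : List ℝ :=
  if h : A.IsHermitian then (Finset.univ.val.map h.eigenvalues).sort (· ≤ ·) else []

/-- The second smallest eigenvalue (with multiplicity) of a symmetric real matrix. -/
noncomputable def secondSmallestEig {n : ℕ} (A : Matrix (Fin n) (Fin n) ℝ) : ℝ :=
  (sortedEigs A).getD 1 0

/-- The largest eigenvalue of a symmetric real matrix. -/
noncomputable def largestEig {n : ℕ} (A : Matrix (Fin n) (Fin n) ℝ) : ℝ :=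
  (sortedEigs A).getD (n - 1) 0

/-- A signed weighted graph on `n` vertices, given by the positive-part and
negative-part weight functions (an edge carries a positive weight and a sign;
`wplus i j > 0` iff `(i,j)` is a positive edge, `wminus i j > 0` iff it is a
negative edge). -/
structure SignedGraph (n : ℕ) where
  wplus : Fin n → Fin n → ℝ
  wminus : Fin n → Fin n → ℝ
  wplus_symm : ∀ i j, wplus i j = wplus j i
  wminus_symm : ∀ i j, wminus i j = wminus j i
  wplus_nonneg : ∀ i j, 0 ≤ wplus i j
  wminus_nonneg : ∀ i j, 0 ≤ wminus i j
  wplus_diag : ∀ i, wplus i i = 0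
  wminus_diag : ∀ i, wminus i i = 0
  disjoint : ∀ i j, wplus i j = 0 ∨ wminus i j = 0

namespace SignedGraph

variable {n : ℕ} (Γ : SignedGraph n)

/-- positive degree -/
noncomputable def dplus (i : Fin n) : ℝ := ∑ j, Γ.wplus i j

/-- negative degree -/
noncomputable def dminus (i : Fin n) : ℝ := ∑ j, Γ.wminus i j

/-- Laplacian of the positive subgraph -/
noncomputable def Lplus : Matrix (Fin n) (Fin n) ℝ :=
  Matrix.of fun i j => if i = j then Γ.dplus i else -Γ.wplus i j

/-- Laplacian of the negative subgraph -/
noncomputable def Lminus : Matrix (Fin n) (Fin n) ℝ :=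
  Matrix.of fun i j => if i = j then Γ.dminus i else -Γ.wminus i j

/-- the ε-repelling Laplacian `L₊ - ε L₋` -/
noncomputable def Leps (ε : ℝ) : Matrix (Fin n) (Fin n) ℝ := Γ.Lplus - ε • Γ.Lminus

/-- the positive subgraph as a simple graph -/
def posGraph : SimpleGraph (Fin n) := SimpleGraph.fromRel (fun i j => 0 < Γ.wplus i j)

/-- the negative subgraph as a simple graph -/
def negGraph : SimpleGraph (Fin n) := SimpleGraph.fromRel (fun i j => 0 < Γ.wminus i j)

/-- the underlying simple graph -/
def underlying : SimpleGraph (Fin n) :=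
  SimpleGraph.fromRel (fun i j => 0 < Γ.wplus i j + Γ.wminus i j)

/-- the signed graph is positive-connected -/
def PosConnected : Prop := Γ.posGraph.Connected

/-- the signed graph is negative-connected -/
def NegConnected : Prop := Γ.negGraph.Connected

/-- the consensus index ε₀ -/
noncomputable def consensusIndex : ℝ :=
  sSup {ε : ℝ | 0 < ε ∧ (Γ.Leps ε).PosSemidef ∧ (Γ.Leps ε).rank = n - 1}

/-- the ε-repelling cost Ω_ε(i,j) = (e_i - e_j)ᵀ L_ε† (e_i - e_j) -/
noncomputable def cost (ε : ℝ) (i j : Fin n) : ℝ :=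
  (Pi.single i 1 - Pi.single j 1) ⬝ᵥ (pinv (Γ.Leps ε)) *ᵥ (Pi.single i 1 - Pi.single j 1)

/-- the ε-repelling matrix Ω_ε -/
noncomputable def costMatrix (ε : ℝ) : Matrix (Fin n) (Fin n) ℝ :=
  Matrix.of fun i j => Γ.cost ε i j

/-- the node ε-repelling curvature, the unique solution of Ω_ε τ_ε = n·1 -/
noncomputable def tau (ε : ℝ) : Fin n → ℝ :=
  (Γ.costMatrix ε)⁻¹ *ᵥ (fun _ => (n : ℝ))

/-- φ_ε = n · 1ᵀ Ω_ε⁻¹ 1 -/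
noncomputable def phi (ε : ℝ) : ℝ :=
  (n : ℝ) * ((fun _ => (1 : ℝ)) ⬝ᵥ ((Γ.costMatrix ε)⁻¹ *ᵥ fun _ => (1 : ℝ)))

/-- the quantity Λ_ε(i,j) appearing in the edge ε-repelling curvature -/
noncomputable def Lam (ε : ℝ) (i j : Fin n) : ℝ :=
  (Γ.dminus i + Γ.dminus j)
    - (∑ k, Γ.cost ε j k * Γ.wminus i k + ∑ k, Γ.cost ε i k * Γ.wminus j k) / Γ.cost ε i j

/-- the edge ε-repelling curvature ϑ_ε(i,j) -/
noncomputable def edgeCurv (ε : ℝ) (i j : Fin n) : ℝ :=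
  2 * (Γ.tau ε i + Γ.tau ε j) / Γ.cost ε i j + (1 + ε) * Γ.Lam ε i j

end SignedGraph


section GraphAux

namespace SignedGraph

variable {n : ℕ} (Γ : SignedGraph n)

lemma leps_herm (ε : ℝ) : (Γ.Leps ε).IsHermitian := by
  apply herm_gen
  intro i j
  simp only [Leps, Lplus, Lminus, Matrix.sub_apply, Matrix.smul_apply, Matrix.of_apply,
    smul_eq_mul]
  rcases eq_or_ne i j with rfl | h
  · rfl
  · simp [h, h.symm, Γ.wplus_symm i j, Γ.wminus_symm i j]

lemma quad_plus (x : Fin n → ℝ) :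
    x ⬝ᵥ Γ.Lplus *ᵥ x = (∑ i, ∑ j, Γ.wplus i j * (x i - x j) ^ 2) / 2 :=
  lap_quad Γ.wplus Γ.wplus_symm Γ.wplus_diag x

lemma quad_minus (x : Fin n → ℝ) :
    x ⬝ᵥ Γ.Lminus *ᵥ x = (∑ i, ∑ j, Γ.wminus i j * (x i - x j) ^ 2) / 2 :=
  lap_quad Γ.wminus Γ.wminus_symm Γ.wminus_diag x

lemma quad_leps (ε : ℝ) (x : Fin n → ℝ) :
    x ⬝ᵥ Γ.Leps ε *ᵥ x = x ⬝ᵥ Γ.Lplus *ᵥ x - ε * (x ⬝ᵥ Γ.Lminus *ᵥ x) := by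
  rw [Leps, Matrix.sub_mulVec, Matrix.smul_mulVec, dotProduct_sub, dotProduct_smul,
    smul_eq_mul]

lemma quad_minus_nonneg (x : Fin n → ℝ) : 0 ≤ x ⬝ᵥ Γ.Lminus *ᵥ x := by
  rw [Γ.quad_minus x]
  apply div_nonneg _ (by norm_num)
  refine Finset.sum_nonneg fun i _ => Finset.sum_nonneg fun j _ => ?_
  exact mul_nonneg (Γ.wminus_nonneg i j) (sq_nonneg _)

lemma leps_psd {ε ε' : ℝ} (hle : ε ≤ ε') (hPSD : (Γ.Leps ε').PosSemidef) :
    (Γ.Leps ε).PosSemidef := by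
  refine Matrix.posSemidef_iff_dotProduct_mulVec.mpr ⟨Γ.leps_herm ε, fun x => ?_⟩
  have h1 : 0 ≤ x ⬝ᵥ Γ.Leps ε' *ᵥ x := by
    have := (Matrix.posSemidef_iff_dotProduct_mulVec.mp hPSD).2 x
    simpa using this
  have h2 := Γ.quad_minus_nonneg x
  rw [Γ.quad_leps ε' x] at h1
  have : 0 ≤ x ⬝ᵥ Γ.Leps ε *ᵥ x := by
    rw [Γ.quad_leps ε x]
    nlinarith
  simpa using this

end SignedGraph

end GraphAux

/-- upper bound for λ₂ of the ε-repelling Laplacian on a signed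
graph which is both positive- and negative-connected. -/
theorem stmt1 {n : ℕ} (Γ : SignedGraph n) (hpc : Γ.PosConnected) (hnc : Γ.NegConnected)
    (ε : ℝ) (hε0 : 0 < ε) (hε : ε < Γ.consensusIndex) :
    secondSmallestEig (Γ.Leps ε) ≤
      2 * (⨆ i : Fin n, Γ.dplus i)
        - ε * sInf {c : ℝ | ∃ i j : Fin n, 0 < Γ.wminus i j ∧ c = Γ.wminus i j}
            / ((Γ.underlying.diam : ℝ) * (n : ℝ)) := by
  classical
  -- extract a PSD point beyond ε
  obtain ⟨ε', hε'S, hεε'⟩ : ∃ ε' ∈ {e : ℝ | 0 < e ∧ (Γ.Leps e).PosSemidef ∧ (Γ.Leps e).rank = n - 1}, ε < ε' := by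
    by_cases hS : {e : ℝ | 0 < e ∧ (Γ.Leps e).PosSemidef ∧ (Γ.Leps e).rank = n - 1}.Nonempty
    · exact exists_lt_of_lt_csSup hS hε
    · exfalso
      rw [SignedGraph.consensusIndex, Set.not_nonempty_iff_eq_empty.mp hS, Real.sSup_empty] at hε
      linarith
  have hPSD : (Γ.Leps ε).PosSemidef := Γ.leps_psd hεε'.le hε'S.2.1
  have hherm : (Γ.Leps ε).IsHermitian := hPSD.1
  -- the sorted list of eigenvalues
  set l : List ℝ := (Finset.univ.val.map hherm.eigenvalues).sort (· ≤ ·) with hl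
  have hsortedEigs : sortedEigs (Γ.Leps ε) = l := by
    rw [sortedEigs, dif_pos hherm]
  have hlen : l.length = n := by
    rw [hl, Multiset.length_sort, Multiset.card_map]
    simp
  have hsorted : l.Pairwise (· ≤ ·) := Multiset.pairwise_sort _ _
  have hnn : ∀ y ∈ l, 0 ≤ y := by
    intro y hy
    rw [hl, Multiset.mem_sort] at hy
    obtain ⟨i, -, rfl⟩ := Multiset.mem_map.mp hy
    exact hPSD.eigenvalues_nonneg i
  have hsum : l.sum = (Γ.Leps ε).trace := by
    have h1 : (l : Multiset ℝ).sum = l.sum := Multiset.sum_coe l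
    rw [aux_trace_eq_sum_eigs hherm]
    rw [← h1, hl, Multiset.sort_eq]
    rfl
  -- dispose of small n
  rcases lt_or_ge n 2 with hn2 | hn2
  · have : n = 0 ∨ n = 1 := by omega
    rcases this with rfl | rfl
    · have hne := (show Γ.posGraph.Connected from hpc).nonempty
      obtain ⟨x⟩ := hne
      exact x.elim0
    · -- n = 1
      have hLHS : secondSmallestEig (Γ.Leps ε) = 0 := by
        rw [secondSmallestEig, hsortedEigs, List.getD_eq_default]
        omega
      have hd : ∀ i : Fin 1, Γ.dplus i = 0 := by
        intro i
        have : i = 0 := Fin.eq_zero i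
        subst this
        simp [SignedGraph.dplus, Γ.wplus_diag]
      have hsup : (⨆ i : Fin 1, Γ.dplus i) = 0 := by
        simp [hd]
      have hset : {c : ℝ | ∃ i j : Fin 1, 0 < Γ.wminus i j ∧ c = Γ.wminus i j} = ∅ := by
        ext c
        simp only [Set.mem_setOf_eq, Set.mem_empty_iff_false, iff_false, not_exists]
        intro i j
        rw [Subsingleton.elim i j, Γ.wminus_diag j]
        simp
      rw [hLHS, hsup, hset, Real.sInf_empty]
      norm_num
  -- main case : n ≥ 2
  have hnR : (2:ℝ) ≤ (n:ℝ) := by exact_mod_cast hn2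
  have hkey : ((n:ℝ) - 1) * secondSmallestEig (Γ.Leps ε) ≤ (Γ.Leps ε).trace := by
    have := aux_list l hsorted hnn (by omega)
    rw [hlen, hsum] at this
    rw [secondSmallestEig, hsortedEigs]
    exact this
  -- trace formula
  have htr : (Γ.Leps ε).trace = ∑ i, (Γ.dplus i - ε * Γ.dminus i) := by
    rw [Matrix.trace]
    refine Finset.sum_congr rfl fun i _ => ?_
    simp [Matrix.diag, SignedGraph.Leps, SignedGraph.Lplus, SignedGraph.Lminus]
  set M := ⨆ i : Fin n, Γ.dplus i with hM
  set μ := sInf {c : ℝ | ∃ i j : Fin n, 0 < Γ.wminus i j ∧ c = Γ.wminus i j} with hμ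
  have hne : Nonempty (Fin n) := ⟨⟨0, by omega⟩⟩
  have hdple : ∀ i, Γ.dplus i ≤ M := fun i =>
    le_ciSup (Set.Finite.bddAbove (Set.finite_range _)) i
  have hdp0 : ∀ i, 0 ≤ Γ.dplus i := fun i =>
    Finset.sum_nonneg fun j _ => Γ.wplus_nonneg i j
  have hM0 : 0 ≤ M := le_trans (hdp0 hne.some) (hdple hne.some)
  -- every vertex has a negative neighbour
  have hnbr : ∀ i : Fin n, ∃ j, 0 < Γ.wminus i j := by
    intro i
    obtain ⟨j, hij⟩ : ∃ j : Fin n, j ≠ i := by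
      rcases eq_or_ne i ⟨0, by omega⟩ with rfl | h
      · exact ⟨⟨1, by omega⟩, by simp [Fin.ext_iff]⟩
      · exact ⟨⟨0, by omega⟩, fun hc => h hc.symm⟩
    have hreach : Γ.negGraph.Reachable i j := (show Γ.negGraph.Connected from hnc).preconnected i j
    obtain ⟨w⟩ := hreach
    cases w with
    | nil => exact absurd rfl hij
    | cons hadj p =>
      rename_i b
      rw [SignedGraph.negGraph, SimpleGraph.fromRel_adj] at hadj
      obtain ⟨-, h1 | h1⟩ := hadj
      · exact ⟨b, h1⟩
      · exact ⟨b, (Γ.wminus_symm i b ▸ h1)⟩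
  have hbdd : BddBelow {c : ℝ | ∃ i j : Fin n, 0 < Γ.wminus i j ∧ c = Γ.wminus i j} := by
    refine ⟨0, fun c hc => ?_⟩
    obtain ⟨a, b, -, rfl⟩ := hc
    exact Γ.wminus_nonneg a b
  have hsetne : {c : ℝ | ∃ i j : Fin n, 0 < Γ.wminus i j ∧ c = Γ.wminus i j}.Nonempty := by
    obtain ⟨j, hj⟩ := hnbr hne.some
    exact ⟨Γ.wminus hne.some j, hne.some, j, hj, rfl⟩
  have hμ0 : 0 ≤ μ := le_csInf hsetne fun c hc => by
    obtain ⟨a, b, -, rfl⟩ := hc; exact Γ.wminus_nonneg a b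
  have hμle : ∀ i, μ ≤ Γ.dminus i := by
    intro i
    obtain ⟨j, hj⟩ := hnbr i
    have h1 : μ ≤ Γ.wminus i j := csInf_le hbdd ⟨i, j, hj, rfl⟩
    have h2 : Γ.wminus i j ≤ Γ.dminus i :=
      Finset.single_le_sum (fun k _ => Γ.wminus_nonneg i k) (Finset.mem_univ j)
    linarith
  -- trace bound
  have h1 : ∑ i, Γ.dplus i ≤ (n:ℝ) * M := by
    calc ∑ i, Γ.dplus i ≤ ∑ _i : Fin n, M := Finset.sum_le_sum fun i _ => hdple i
    _ = (n:ℝ) * M := by rw [Finset.sum_const, Finset.card_univ, Fintype.card_fin, nsmul_eq_mul]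
  have h2 : (n:ℝ) * μ ≤ ∑ i, Γ.dminus i := by
    calc (n:ℝ) * μ = ∑ _i : Fin n, μ := by
          rw [Finset.sum_const, Finset.card_univ, Fintype.card_fin, nsmul_eq_mul]
    _ ≤ ∑ i, Γ.dminus i := Finset.sum_le_sum fun i _ => hμle i
  have htrb : (Γ.Leps ε).trace ≤ (n:ℝ) * M - ε * ((n:ℝ) * μ) := by
    rw [htr, Finset.sum_sub_distrib, ← Finset.mul_sum]
    have := mul_le_mul_of_nonneg_left h2 hε0.le
    linarith
  -- the subtracted quantity
  set q := ε * μ / ((Γ.underlying.diam : ℝ) * (n : ℝ)) with hq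
  have hq0 : 0 ≤ q :=
    div_nonneg (mul_nonneg hε0.le hμ0) (mul_nonneg (Nat.cast_nonneg _) (Nat.cast_nonneg _))
  have hqb : q * ((n:ℝ) - 1) ≤ ε * μ * (n:ℝ) := by
    rcases Nat.eq_zero_or_pos Γ.underlying.diam with hD | hD
    · have hq00 : q = 0 := by rw [hq, hD]; norm_num
      rw [hq00]
      have h0 : (0:ℝ) ≤ ε * μ * (n:ℝ) :=
        mul_nonneg (mul_nonneg hε0.le hμ0) (Nat.cast_nonneg n)
      linarith
    · have hD1 : (1:ℝ) ≤ (Γ.underlying.diam : ℝ) * (n:ℝ) := by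
        have : (1:ℝ) ≤ (Γ.underlying.diam : ℝ) := by exact_mod_cast hD
        nlinarith
      have hqle : q ≤ ε * μ := by
        rw [hq]
        exact div_le_self (mul_nonneg hε0.le hμ0) hD1
      nlinarith
  -- finish
  have hfin : ((n:ℝ) - 1) * secondSmallestEig (Γ.Leps ε) ≤ ((n:ℝ) - 1) * (2 * M - q) := by
    calc ((n:ℝ) - 1) * secondSmallestEig (Γ.Leps ε) ≤ (Γ.Leps ε).trace := hkey
    _ ≤ (n:ℝ) * M - ε * ((n:ℝ) * μ) := htrb
    _ ≤ ((n:ℝ) - 1) * (2 * M - q) := by nlinarith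
  have hpos : (0:ℝ) < (n:ℝ) - 1 := by linarith
  exact le_of_mul_le_mul_left hfin hpos
end

section
/- Let (G,σ,w) be a positive-connected signed graph with consensus index ε₀. For any ε₁ < ε₂ < ε₀ and all vertices i,j ∈ V, the ε-repelling costs satisfy Ω_{ε₁}(i,j) ≤ Ω_{ε₂}(i,j). In particular, since L_{−1} = L₊ + L₋ is the Laplacian of the underlying graph G, for every 0 < ε < ε₀ the effective resistance Ω(i,j) of the underlying graph satisfies Ω(i,j) ≤ Ω_ε(i,j). -/
open Matrix BigOperators
open scoped Classical

section PinvFacts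
variable {n : ℕ}

def IsPinv (A B : Matrix (Fin n) (Fin n) ℝ) : Prop :=
  A * B * A = A ∧ B * A * B = B ∧ (A * B)ᵀ = A * B ∧ (B * A)ᵀ = B * A

lemma isPinv_unique {A B C : Matrix (Fin n) (Fin n) ℝ} (h1 : IsPinv A B) (h2 : IsPinv A C) :
    B = C := by
  obtain ⟨a1, b1, c1, d1⟩ := h1
  obtain ⟨a2, b2, c2, d2⟩ := h2
  have hB : B = B * A * C := by
    calc B = B * A * B := b1.symm
    _ = B * (A * B)ᵀ := by rw [c1, mul_assoc]
    _ = B * (A * (C * (A * B)))ᵀ := by rw [show A * (C * (A * B)) = A * C * A * B by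
          simp only [mul_assoc], a2]
    _ = B * ((A * B)ᵀ * (A * C)ᵀ) := by rw [← transpose_mul]; simp only [mul_assoc]
    _ = B * (A * B) * (A * C) := by rw [c1, c2]; simp only [mul_assoc]
    _ = B * A * C := by rw [← mul_assoc, ← mul_assoc, b1, mul_assoc]
  have hC : C = B * A * C := by
    calc C = C * A * C := b2.symm
    _ = (C * A)ᵀ * C := by rw [d2]
    _ = (C * (A * B * A))ᵀ * C := by rw [a1]
    _ = ((B * A)ᵀ * (C * A)ᵀ) * C := by rw [← transpose_mul]; simp only [mul_assoc]
    _ = (B * A) * (C * A) * C := by rw [d1, d2]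
    _ = B * (A * C * A) * C := by simp only [mul_assoc]
    _ = B * A * C := by rw [a2, mul_assoc]
  rw [hB, ← hC]

lemma pinv_isPinv {A : Matrix (Fin n) (Fin n) ℝ}
    (h : ∃ B, A * B * A = A ∧ B * A * B = B ∧ (A * B)ᵀ = A * B ∧ (B * A)ᵀ = B * A) :
    IsPinv A (pinv A) := by
  rw [pinv, dif_pos h]; exact h.choose_spec

end PinvFacts

section Exists
variable {n : ℕ}

lemma conj_diag_symm (U : Matrix (Fin n) (Fin n) ℝ) (d : Fin n → ℝ) :
    (U * Matrix.diagonal d * star U)ᵀ = U * Matrix.diagonal d * star U := by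
  have hd : star d = d := funext fun i => star_trivial _
  rw [← Matrix.conjTranspose_eq_transpose_of_trivial, Matrix.conjTranspose_mul,
    Matrix.conjTranspose_mul, Matrix.diagonal_conjTranspose, hd,
    Matrix.star_eq_conjTranspose, Matrix.conjTranspose_conjTranspose, mul_assoc]

lemma exists_pinv_of_isHermitian {A : Matrix (Fin n) (Fin n) ℝ} (hA : A.IsHermitian) :
    ∃ B, IsPinv A B ∧ Bᵀ = B := by
  classical
  set U : Matrix (Fin n) (Fin n) ℝ := (Matrix.IsHermitian.eigenvectorUnitary hA : Matrix (Fin n) (Fin n) ℝ) with hUdef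
  have hU1 : star U * U = 1 := Unitary.coe_star_mul_self _
  have hU2 : U * star U = 1 := Unitary.coe_mul_star_self _
  have hEig : (RCLike.ofReal ∘ hA.eigenvalues : Fin n → ℝ) = hA.eigenvalues := by
    funext i; simp
  have hSpec : A = U * Matrix.diagonal hA.eigenvalues * star U := by
    have := hA.spectral_theorem
    rwa [hEig] at this
  set D : Matrix (Fin n) (Fin n) ℝ := Matrix.diagonal hA.eigenvalues
  set D' : Matrix (Fin n) (Fin n) ℝ := Matrix.diagonal (fun i => (hA.eigenvalues i)⁻¹)
  refine ⟨U * D' * star U, ⟨?_, ?_, ?_, ?_⟩, ?_⟩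
  · rw [hSpec]
    have : U * D * star U * (U * D' * star U) * (U * D * star U)
        = U * (D * (star U * U) * D' * (star U * U) * D) * star U := by
      simp only [mul_assoc]
    rw [this, hU1, mul_one, mul_one]
    have hfun : ∀ x : ℝ, x * x⁻¹ * x = x := fun x => by
      rcases eq_or_ne x 0 with h | h
      · simp [h]
      · field_simp
    congr 2
    simp only [D, D', diagonal_mul_diagonal, hfun]
  · rw [hSpec]
    have : U * D' * star U * (U * D * star U) * (U * D' * star U)
        = U * (D' * (star U * U) * D * (star U * U) * D') * star U := by
      simp only [mul_assoc]
    rw [this, hU1, mul_one, mul_one]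
    have hfun : ∀ x : ℝ, x⁻¹ * x * x⁻¹ = x⁻¹ := fun x => by
      rcases eq_or_ne x 0 with h | h
      · simp [h]
      · field_simp
    congr 2
    simp only [D, D', diagonal_mul_diagonal, hfun]
  · rw [hSpec]
    have h1 : U * D * star U * (U * D' * star U) = U * (D * (star U * U) * D') * star U := by
      simp only [mul_assoc]
    rw [h1, hU1, mul_one]
    simp only [D, D', diagonal_mul_diagonal]
    exact conj_diag_symm U _
  · rw [hSpec]
    have h1 : U * D' * star U * (U * D * star U) = U * (D' * (star U * U) * D) * star U := by
      simp only [mul_assoc]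
    rw [h1, hU1, mul_one]
    simp only [D, D', diagonal_mul_diagonal]
    exact conj_diag_symm U _
  · exact conj_diag_symm U _

lemma pinv_spec {A : Matrix (Fin n) (Fin n) ℝ} (hA : A.IsHermitian) :
    IsPinv A (pinv A) ∧ (pinv A)ᵀ = pinv A := by
  obtain ⟨B, hB, hBs⟩ := exists_pinv_of_isHermitian hA
  have h := pinv_isPinv ⟨B, hB.1, hB.2.1, hB.2.2.1, hB.2.2.2⟩
  exact ⟨h, by rw [isPinv_unique h hB]; exact hBs⟩

end Exists

section Lap
variable {n : ℕ}

/-- generic weighted Laplacian -/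
def lap (w : Fin n → Fin n → ℝ) : Matrix (Fin n) (Fin n) ℝ :=
  Matrix.of fun i j => if i = j then (∑ k, w i k) else -w i j

variable {w : Fin n → Fin n → ℝ}

lemma lap_mulVec (hd : ∀ i, w i i = 0) (x : Fin n → ℝ) (i : Fin n) :
    (lap w *ᵥ x) i = ∑ j, w i j * (x i - x j) := by
  have hterm : ∀ j, (lap w) i j * x j
      = (if i = j then (∑ k, w i k) else 0) * x j - w i j * x j := by
    intro j
    by_cases h : i = j
    · subst h; simp [lap, hd]
    · simp [lap, h]
  calc (lap w *ᵥ x) i = ∑ j, (lap w) i j * x j := rfl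
  _ = ∑ j, ((if i = j then (∑ k, w i k) else 0) * x j - w i j * x j) := by
      exact Finset.sum_congr rfl fun j _ => hterm j
  _ = (∑ j, (if i = j then (∑ k, w i k) else 0) * x j) - ∑ j, w i j * x j := by
      rw [Finset.sum_sub_distrib]
  _ = (∑ k, w i k) * x i - ∑ j, w i j * x j := by
      congr 1
      simp [Finset.sum_ite_eq]
  _ = ∑ j, w i j * (x i - x j) := by
      simp only [mul_sub, Finset.sum_sub_distrib, Finset.sum_mul]

lemma lap_quad_s2 (hsymm : ∀ i j, w i j = w j i) (hd : ∀ i, w i i = 0) (x : Fin n → ℝ) :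
    x ⬝ᵥ (lap w *ᵥ x) = (1/2) * ∑ i, ∑ j, w i j * (x i - x j)^2 := by
  have hlhs : x ⬝ᵥ (lap w *ᵥ x) = ∑ i, ∑ j, w i j * (x i ^ 2 - x i * x j) := by
    calc x ⬝ᵥ (lap w *ᵥ x) = ∑ i, x i * (lap w *ᵥ x) i := rfl
    _ = ∑ i, x i * ∑ j, w i j * (x i - x j) := by
        exact Finset.sum_congr rfl fun i _ => by rw [lap_mulVec hd]
    _ = ∑ i, ∑ j, w i j * (x i ^ 2 - x i * x j) := by
        refine Finset.sum_congr rfl fun i _ => ?_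
        rw [Finset.mul_sum]
        exact Finset.sum_congr rfl fun j _ => by ring
  have hswap : ∑ i, ∑ j, w i j * (x j ^ 2 - x i * x j)
      = ∑ i, ∑ j, w i j * (x i ^ 2 - x i * x j) := by
    rw [Finset.sum_comm]
    refine Finset.sum_congr rfl fun i _ => Finset.sum_congr rfl fun j _ => ?_
    rw [hsymm j i]; ring
  have hexp : ∑ i, ∑ j, w i j * (x i - x j)^2
      = (∑ i, ∑ j, w i j * (x i ^ 2 - x i * x j))
        + ∑ i, ∑ j, w i j * (x j ^ 2 - x i * x j) := by
    rw [← Finset.sum_add_distrib]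
    refine Finset.sum_congr rfl fun i _ => ?_
    rw [← Finset.sum_add_distrib]
    exact Finset.sum_congr rfl fun j _ => by ring
  rw [hlhs, hexp, hswap]; ring

lemma lap_isHermitian (hsymm : ∀ i j, w i j = w j i) : (lap w).IsHermitian := by
  rw [Matrix.IsHermitian, Matrix.conjTranspose_eq_transpose_of_trivial]
  ext i j
  by_cases h : i = j
  · subst h; rfl
  · simp [lap, Matrix.transpose_apply, h, Ne.symm h, hsymm i j]

lemma lap_posSemidef (hsymm : ∀ i j, w i j = w j i) (hnonneg : ∀ i j, 0 ≤ w i j)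
    (hd : ∀ i, w i i = 0) : (lap w).PosSemidef := by
  refine Matrix.PosSemidef.of_dotProduct_mulVec_nonneg (lap_isHermitian hsymm) fun x => ?_
  have : star x = x := by funext i; simp
  rw [this, lap_quad_s2 hsymm hd]
  have : 0 ≤ ∑ i, ∑ j, w i j * (x i - x j)^2 :=
    Finset.sum_nonneg fun i _ => Finset.sum_nonneg fun j _ =>
      mul_nonneg (hnonneg i j) (sq_nonneg _)
  linarith

lemma lap_kernel_edges (hsymm : ∀ i j, w i j = w j i) (hnonneg : ∀ i j, 0 ≤ w i j)
    (hd : ∀ i, w i i = 0) {x : Fin n → ℝ} (hx : x ⬝ᵥ (lap w *ᵥ x) = 0) :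
    ∀ i j, 0 < w i j → x i = x j := by
  intro i j hw
  rw [lap_quad_s2 hsymm hd] at hx
  have hsum : ∑ i, ∑ j, w i j * (x i - x j)^2 = 0 := by linarith
  have hnn : ∀ i ∈ Finset.univ, (0:ℝ) ≤ ∑ j, w i j * (x i - x j)^2 :=
    fun i _ => Finset.sum_nonneg fun j _ => mul_nonneg (hnonneg i j) (sq_nonneg _)
  have h1 := (Finset.sum_eq_zero_iff_of_nonneg hnn).mp hsum i (Finset.mem_univ i)
  have h2 := (Finset.sum_eq_zero_iff_of_nonneg
    (fun j _ => mul_nonneg (hnonneg i j) (sq_nonneg _))).mp h1 j (Finset.mem_univ j)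
  have := mul_eq_zero.mp h2
  rcases this with h | h
  · exact absurd h (ne_of_gt hw)
  · have := sq_eq_zero_iff.mp h
    linarith

lemma lap_mulVec_one (hd : ∀ i, w i i = 0) :
    lap w *ᵥ (fun _ => (1:ℝ)) = 0 := by
  funext i
  rw [show (0 : Fin n → ℝ) i = 0 from rfl, lap_mulVec hd]
  simp

end Lap

section Key
variable {n : ℕ}

lemma hdp (M : Matrix (Fin n) (Fin n) ℝ) (u v : Fin n → ℝ) :
    (M *ᵥ u) ⬝ᵥ v = u ⬝ᵥ (Mᵀ *ᵥ v) := by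
  rw [Matrix.dotProduct_mulVec, Matrix.vecMul_transpose]

lemma key {A B : Matrix (Fin n) (Fin n) ℝ} (hA : A.PosSemidef) (hB : B.PosSemidef)
    (hAB : (A - B).PosSemidef) {x : Fin n → ℝ} (hx : ∃ z, B *ᵥ z = x) :
    x ⬝ᵥ pinv A *ᵥ x ≤ x ⬝ᵥ pinv B *ᵥ x := by
  obtain ⟨z, hz⟩ := hx
  obtain ⟨⟨pa1, pa2, pa3, pa4⟩, paT⟩ := pinv_spec hA.isHermitian
  obtain ⟨⟨pb1, pb2, pb3, pb4⟩, pbT⟩ := pinv_spec hB.isHermitian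
  have hBt : Bᵀ = B := by
    rw [← Matrix.conjTranspose_eq_transpose_of_trivial]; exact hB.isHermitian
  set P := pinv A with hP
  set Q := pinv B with hQ
  set y := P *ᵥ x with hy
  -- quadratic form positivity without stars
  have hApos : ∀ v, 0 ≤ v ⬝ᵥ ((A - B) *ᵥ v) := by
    intro v
    have := hAB.dotProduct_mulVec_nonneg v
    rwa [show star v = v from funext fun i => star_trivial _] at this
  have hBpos : ∀ v, 0 ≤ v ⬝ᵥ (B *ᵥ v) := by
    intro v
    have := hB.dotProduct_mulVec_nonneg v
    rwa [show star v = v from funext fun i => star_trivial _] at this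
  have hyA : y ⬝ᵥ (A *ᵥ y) = x ⬝ᵥ (P *ᵥ x) := by
    calc y ⬝ᵥ (A *ᵥ y) = (P *ᵥ x) ⬝ᵥ ((A * P) *ᵥ x) := by rw [hy, Matrix.mulVec_mulVec]
    _ = x ⬝ᵥ ((Pᵀ * (A * P)) *ᵥ x) := by rw [hdp, Matrix.mulVec_mulVec]
    _ = x ⬝ᵥ (P *ᵥ x) := by rw [paT, ← mul_assoc, pa2]
  have hq : x ⬝ᵥ (Q *ᵥ x) = z ⬝ᵥ (B *ᵥ z) := by
    calc x ⬝ᵥ (Q *ᵥ x) = (B *ᵥ z) ⬝ᵥ ((Q * B) *ᵥ z) := by rw [← hz, Matrix.mulVec_mulVec]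
    _ = z ⬝ᵥ ((Bᵀ * (Q * B)) *ᵥ z) := by rw [hdp, Matrix.mulVec_mulVec]
    _ = z ⬝ᵥ (B *ᵥ z) := by rw [hBt, ← mul_assoc, pb1]
  have hxy : x ⬝ᵥ y = z ⬝ᵥ (B *ᵥ y) := by
    calc x ⬝ᵥ y = (B *ᵥ z) ⬝ᵥ y := by rw [hz]
    _ = z ⬝ᵥ (Bᵀ *ᵥ y) := hdp _ _ _
    _ = z ⬝ᵥ (B *ᵥ y) := by rw [hBt]
  have hsymmB : y ⬝ᵥ (B *ᵥ z) = z ⬝ᵥ (B *ᵥ y) := by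
    calc y ⬝ᵥ (B *ᵥ z) = (B *ᵥ z) ⬝ᵥ y := dotProduct_comm _ _
    _ = z ⬝ᵥ (Bᵀ *ᵥ y) := hdp _ _ _
    _ = z ⬝ᵥ (B *ᵥ y) := by rw [hBt]
  -- step 2 : y B y ≤ y A y
  have h2 : y ⬝ᵥ (B *ᵥ y) ≤ y ⬝ᵥ (A *ᵥ y) := by
    have := hApos y
    rw [Matrix.sub_mulVec, dotProduct_sub] at this
    linarith
  -- step 3 : (z - y) B (z - y) ≥ 0 expand
  have h3 : 0 ≤ z ⬝ᵥ (B *ᵥ z) - 2 * (z ⬝ᵥ (B *ᵥ y)) + y ⬝ᵥ (B *ᵥ y) := by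
    have h0 := hBpos (z - y)
    rw [Matrix.mulVec_sub, dotProduct_sub, sub_dotProduct,
      sub_dotProduct] at h0
    linarith [hsymmB]
  have hxPx : x ⬝ᵥ (P *ᵥ x) = 2 * (x ⬝ᵥ y) - y ⬝ᵥ (A *ᵥ y) := by
    have hxyP : x ⬝ᵥ y = x ⬝ᵥ (P *ᵥ x) := by rw [hy]
    rw [hxyP, hyA]; ring
  calc x ⬝ᵥ (P *ᵥ x) = 2 * (x ⬝ᵥ y) - y ⬝ᵥ (A *ᵥ y) := hxPx
  _ ≤ 2 * (x ⬝ᵥ y) - y ⬝ᵥ (B *ᵥ y) := by linarith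
  _ = 2 * (z ⬝ᵥ (B *ᵥ y)) - y ⬝ᵥ (B *ᵥ y) := by rw [hxy]
  _ ≤ z ⬝ᵥ (B *ᵥ z) := by linarith
  _ = x ⬝ᵥ (Q *ᵥ x) := hq.symm

end Key

section GraphLemmas

lemma walk_const {V : Type*} {G : SimpleGraph V} {x : V → ℝ}
    (hx : ∀ i j, G.Adj i j → x i = x j) {i j : V} (p : G.Walk i j) : x i = x j := by
  induction p with
  | nil => rfl
  | cons h _ ih => exact (hx _ _ h).trans ih

namespace SignedGraph
variable {n : ℕ} (Γ : SignedGraph n)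

lemma Lplus_eq : Γ.Lplus = lap Γ.wplus := rfl
lemma Lminus_eq : Γ.Lminus = lap Γ.wminus := rfl

lemma Lplus_psd : Γ.Lplus.PosSemidef := by
  rw [Lplus_eq]; exact lap_posSemidef Γ.wplus_symm Γ.wplus_nonneg Γ.wplus_diag

lemma Lminus_psd : Γ.Lminus.PosSemidef := by
  rw [Lminus_eq]; exact lap_posSemidef Γ.wminus_symm Γ.wminus_nonneg Γ.wminus_diag

lemma psd_smul {c : ℝ} (hc : 0 ≤ c) {M : Matrix (Fin n) (Fin n) ℝ} (hM : M.PosSemidef) :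
    (c • M).PosSemidef := by
  refine Matrix.PosSemidef.of_dotProduct_mulVec_nonneg ?_ ?_
  · rw [Matrix.IsHermitian, Matrix.conjTranspose_smul, hM.isHermitian.eq]
    congr 1
  · intro x
    rw [Matrix.smul_mulVec, dotProduct_smul]
    exact mul_nonneg hc (hM.dotProduct_mulVec_nonneg x)

lemma psd_q {M : Matrix (Fin n) (Fin n) ℝ} (hM : M.PosSemidef) (x : Fin n → ℝ) :
    0 ≤ x ⬝ᵥ (M *ᵥ x) := by
  have := hM.dotProduct_mulVec_nonneg x
  rwa [show star x = x from funext fun i => star_trivial _] at this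

lemma Leps_sub (a b : ℝ) : Γ.Leps a - Γ.Leps b = (b - a) • Γ.Lminus := by
  rw [Leps, Leps, sub_smul]
  abel

lemma Leps_neg_one : Γ.Leps (-1) = Γ.Lplus + Γ.Lminus := by
  rw [Leps, neg_smul, one_smul, sub_neg_eq_add]

lemma Leps_mulVec_one (ε : ℝ) : Γ.Leps ε *ᵥ (fun _ => (1:ℝ)) = 0 := by
  rw [Leps, Matrix.sub_mulVec, Matrix.smul_mulVec, Lplus_eq, Lminus_eq,
    lap_mulVec_one Γ.wplus_diag, lap_mulVec_one Γ.wminus_diag, smul_zero, sub_zero]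

/-- `Good ε`: the ε-repelling Laplacian is PSD and its kernel consists of constants. -/
def Good (ε : ℝ) : Prop :=
  (Γ.Leps ε).PosSemidef ∧ ∀ x : Fin n → ℝ, Γ.Leps ε *ᵥ x = 0 → ∀ i j, x i = x j

lemma good_decomp {ε : ℝ} (M : Matrix (Fin n) (Fin n) ℝ) (c : ℝ) (hc : 0 ≤ c)
    (hMpsd : M.PosSemidef) (hker : ∀ x : Fin n → ℝ, M *ᵥ x = 0 → ∀ i j, x i = x j)
    (hdecomp : Γ.Leps ε = M + c • Γ.Lminus) : Γ.Good ε := by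
  have hC : (c • Γ.Lminus).PosSemidef := psd_smul hc Γ.Lminus_psd
  constructor
  · rw [hdecomp]; exact hMpsd.add hC
  · intro x hx i j
    have hq : x ⬝ᵥ (M *ᵥ x) + x ⬝ᵥ ((c • Γ.Lminus) *ᵥ x) = 0 := by
      have h0 : x ⬝ᵥ ((M + c • Γ.Lminus) *ᵥ x) = 0 := by
        rw [← hdecomp, hx, dotProduct_zero]
      rwa [Matrix.add_mulVec, dotProduct_add] at h0
    have h1 : 0 ≤ x ⬝ᵥ (M *ᵥ x) := psd_q hMpsd x
    have h2 : 0 ≤ x ⬝ᵥ ((c • Γ.Lminus) *ᵥ x) := psd_q hC x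
    have h3 : x ⬝ᵥ (M *ᵥ x) = 0 := by linarith
    have h4 : M *ᵥ x = 0 := by
      refine (hMpsd.dotProduct_mulVec_zero_iff x).mp ?_
      rwa [show star x = x from funext fun i => star_trivial _]
    exact hker x h4 i j

lemma good_nonpos (hpc : Γ.PosConnected) {ε : ℝ} (hε : ε ≤ 0) : Γ.Good ε := by
  refine Γ.good_decomp Γ.Lplus (-ε) (by linarith) Γ.Lplus_psd ?_ ?_
  · intro x hx i j
    have hq : x ⬝ᵥ (Γ.Lplus *ᵥ x) = 0 := by rw [hx, dotProduct_zero]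
    rw [Lplus_eq] at hq
    have hedge := lap_kernel_edges Γ.wplus_symm Γ.wplus_nonneg Γ.wplus_diag hq
    have hadj : ∀ a b, Γ.posGraph.Adj a b → x a = x b := by
      intro a b hab
      rw [posGraph, SimpleGraph.fromRel_adj] at hab
      rcases hab.2 with h | h
      · exact hedge a b h
      · exact (hedge b a h).symm
    obtain ⟨p⟩ := hpc.preconnected i j
    exact walk_const hadj p
  · rw [Leps, neg_smul, sub_eq_add_neg]

lemma ones_ne_zero (hn : 0 < n) : (fun _ => (1:ℝ)) ≠ (0 : Fin n → ℝ) := by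
  intro h
  have := congrFun h ⟨0, hn⟩
  norm_num at this

lemma span_ones_le_ker {ε : ℝ} :
    Submodule.span ℝ {(fun _ => (1:ℝ) : Fin n → ℝ)} ≤ LinearMap.ker (Γ.Leps ε).mulVecLin := by
  rw [Submodule.span_le, Set.singleton_subset_iff]
  simp only [SetLike.mem_coe, LinearMap.mem_ker, Matrix.mulVecLin_apply]
  exact Γ.Leps_mulVec_one ε

lemma good_of_mem {ε ε' : ℝ} (hle : ε ≤ ε') (h1 : (Γ.Leps ε').PosSemidef)
    (h2 : (Γ.Leps ε').rank = n - 1) : Γ.Good ε := by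
  refine Γ.good_decomp (Γ.Leps ε') (ε' - ε) (by linarith) h1 ?_ ?_
  · intro x hx i j
    have hn : 0 < n := i.pos
    set f := (Γ.Leps ε').mulVecLin with hf
    have hrn := LinearMap.finrank_range_add_finrank_ker f
    have hdim : Module.finrank ℝ (Fin n → ℝ) = n := by
      rw [Module.finrank_pi]; simp
    have hrange : Module.finrank ℝ (LinearMap.range f) = n - 1 := h2
    have hker1 : Module.finrank ℝ (LinearMap.ker f) = 1 := by omega
    have hspan : Module.finrank ℝ
        (Submodule.span ℝ {(fun _ => (1:ℝ) : Fin n → ℝ)}) = 1 :=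
      finrank_span_singleton (ones_ne_zero hn)
    have heq : Submodule.span ℝ {(fun _ => (1:ℝ) : Fin n → ℝ)} = LinearMap.ker f :=
      Submodule.eq_of_le_of_finrank_le (Γ.span_ones_le_ker) (by rw [hker1, hspan])
    have hmem : x ∈ LinearMap.ker f := by
      rw [LinearMap.mem_ker, hf, Matrix.mulVecLin_apply]; exact hx
    rw [← heq, Submodule.mem_span_singleton] at hmem
    obtain ⟨c, hc⟩ := hmem
    have hxi : ∀ k, x k = c := by
      intro k
      rw [← hc]; simp
    rw [hxi i, hxi j]
  · rw [Leps, Leps, sub_smul]; abel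

/-- the sum linear functional -/
noncomputable def sumLF : (Fin n → ℝ) →ₗ[ℝ] ℝ where
  toFun v := ∑ k, v k
  map_add' u v := by simp [Finset.sum_add_distrib]
  map_smul' c v := by simp [Finset.mul_sum]

lemma good_range {ε : ℝ} (hg : Γ.Good ε) (i j : Fin n) :
    ∃ z, Γ.Leps ε *ᵥ z = Pi.single i 1 - Pi.single j 1 := by
  have hn : 0 < n := i.pos
  set f := (Γ.Leps ε).mulVecLin with hf
  have hherm : (Γ.Leps ε).IsHermitian := hg.1.isHermitian
  have hLt : (Γ.Leps ε)ᵀ = Γ.Leps ε := by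
    rw [← Matrix.conjTranspose_eq_transpose_of_trivial]; exact hherm
  -- kernel is the constants
  have hkerle : LinearMap.ker f ≤ Submodule.span ℝ {(fun _ => (1:ℝ) : Fin n → ℝ)} := by
    intro x hx
    rw [LinearMap.mem_ker, hf, Matrix.mulVecLin_apply] at hx
    have hconst := hg.2 x hx
    rw [Submodule.mem_span_singleton]
    exact ⟨x ⟨0, hn⟩, by funext k; simp [hconst ⟨0, hn⟩ k]⟩
  have heq : LinearMap.ker f = Submodule.span ℝ {(fun _ => (1:ℝ) : Fin n → ℝ)} :=
    le_antisymm hkerle (Γ.span_ones_le_ker)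
  have hker1 : Module.finrank ℝ (LinearMap.ker f) = 1 := by
    rw [heq]; exact finrank_span_singleton (ones_ne_zero hn)
  have hdim : Module.finrank ℝ (Fin n → ℝ) = n := by rw [Module.finrank_pi]; simp
  have hrn := LinearMap.finrank_range_add_finrank_ker f
  have hrange : Module.finrank ℝ (LinearMap.range f) = n - 1 := by omega
  -- the sum functional
  have hsurj : Function.Surjective (sumLF (n := n)) := by
    intro r
    refine ⟨fun _ => r / n, ?_⟩
    have : (n:ℝ) ≠ 0 := Nat.cast_ne_zero.mpr hn.ne'
    simp [sumLF]
    field_simp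
  have hrngtop : LinearMap.range (sumLF (n := n)) = ⊤ := LinearMap.range_eq_top.mpr hsurj
  have hrnS := LinearMap.finrank_range_add_finrank_ker (sumLF (n := n))
  have hrs : Module.finrank ℝ (LinearMap.range (sumLF (n := n))) = 1 := by
    rw [hrngtop]; simp
  have hkerS : Module.finrank ℝ (LinearMap.ker (sumLF (n := n))) = n - 1 := by omega
  -- range f ≤ ker sumLF
  have hle : LinearMap.range f ≤ LinearMap.ker (sumLF (n := n)) := by
    rintro v ⟨z, rfl⟩
    rw [LinearMap.mem_ker]
    have h1 : sumLF (f z) = (fun _ => (1:ℝ)) ⬝ᵥ (Γ.Leps ε *ᵥ z) := by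
      simp [sumLF, dotProduct, hf]
    rw [h1, dotProduct_comm, hdp, hLt, Γ.Leps_mulVec_one, dotProduct_zero]
  have hreq : LinearMap.range f = LinearMap.ker (sumLF (n := n)) :=
    Submodule.eq_of_le_of_finrank_le hle (by rw [hkerS, hrange])
  have hmem : (Pi.single i 1 - Pi.single j 1 : Fin n → ℝ) ∈ LinearMap.ker (sumLF (n := n)) := by
    rw [LinearMap.mem_ker]
    simp [sumLF, Finset.sum_sub_distrib, Pi.single_apply]
  rw [← hreq] at hmem
  obtain ⟨z, hz⟩ := hmem
  exact ⟨z, by rw [← hz]; rfl⟩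

lemma cost_mono {ε₁ ε₂ : ℝ} (h1 : Γ.Good ε₁) (h2 : Γ.Good ε₂) (hle : ε₁ ≤ ε₂) (i j : Fin n) :
    Γ.cost ε₁ i j ≤ Γ.cost ε₂ i j := by
  rw [cost, cost]
  refine key h1.1 h2.1 ?_ (Γ.good_range h2 i j)
  rw [Γ.Leps_sub ε₁ ε₂]
  exact psd_smul (by linarith) Γ.Lminus_psd

end SignedGraph

end GraphLemmas

/-- monotonicity of the ε-repelling cost in ε; in particular the
effective resistance of the underlying graph is at most the ε-repelling cost
for 0 < ε < ε₀. -/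
theorem stmt2 {n : ℕ} (Γ : SignedGraph n) (hpc : Γ.PosConnected) :
    (∀ ε₁ ε₂ : ℝ, ε₁ < ε₂ → ε₂ < Γ.consensusIndex →
      ∀ i j : Fin n, Γ.cost ε₁ i j ≤ Γ.cost ε₂ i j) ∧
    (∀ ε : ℝ, 0 < ε → ε < Γ.consensusIndex → ∀ i j : Fin n,
      (Pi.single i 1 - Pi.single j 1) ⬝ᵥ
          (pinv (Γ.Lplus + Γ.Lminus)) *ᵥ (Pi.single i 1 - Pi.single j 1)
        ≤ Γ.cost ε i j) := by
  constructor
  · intro ε₁ ε₂ hlt hlt2 i j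
    have hgoods : Γ.Good ε₁ ∧ Γ.Good ε₂ := by
      by_cases hneg : ε₂ < 0
      · exact ⟨Γ.good_nonpos hpc (by linarith), Γ.good_nonpos hpc (by linarith)⟩
      · push_neg at hneg
        unfold SignedGraph.consensusIndex at hlt2
        have hS : {ε : ℝ | 0 < ε ∧ (Γ.Leps ε).PosSemidef ∧ (Γ.Leps ε).rank = n - 1}.Nonempty := by
          by_contra h
          rw [Set.not_nonempty_iff_eq_empty] at h
          rw [h, Real.sSup_empty] at hlt2
          linarith
        obtain ⟨ε', hmem, hgt⟩ := exists_lt_of_lt_csSup hS hlt2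
        exact ⟨Γ.good_of_mem (by linarith) hmem.2.1 hmem.2.2,
               Γ.good_of_mem (by linarith) hmem.2.1 hmem.2.2⟩
    exact Γ.cost_mono hgoods.1 hgoods.2 (le_of_lt hlt) i j
  · intro ε hε hε₀ i j
    unfold SignedGraph.consensusIndex at hε₀
    have hS : {ε : ℝ | 0 < ε ∧ (Γ.Leps ε).PosSemidef ∧ (Γ.Leps ε).rank = n - 1}.Nonempty := by
      by_contra h
      rw [Set.not_nonempty_iff_eq_empty] at h
      rw [h, Real.sSup_empty] at hε₀
      linarith
    obtain ⟨ε', hmem, hgt⟩ := exists_lt_of_lt_csSup hS hε₀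
    have hg2 : Γ.Good ε := Γ.good_of_mem (le_of_lt hgt) hmem.2.1 hmem.2.2
    have hg1 : Γ.Good (-1) := Γ.good_nonpos hpc (by norm_num)
    have h := Γ.cost_mono hg1 hg2 (by linarith) i j
    simpa [SignedGraph.cost, Γ.Leps_neg_one] using h
end
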